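/- Let A = [A_{ij}] and B = [B_{ij}] be positive definite complex matrices of size nk × nk, each regarded as an n × n block matrix with k × k blocks, and let 2 ≤ μ ≤ n. Then both differences (A_μ ∘ B_μ)/(A_{μ−1} ∘ B_{μ−1}) − A_{μμ} ∘ (B_μ/B_{μ−1}) and A_{μμ} ∘ (B_μ/B_{μ−1}) − (A_μ/A_{μ−1}) ∘ (B_μ/B_{μ−1}) are positive semidefinite k × k matrices. -/

import Mathlib

open Matrix ComplexOrder

/-- The `μk × μk` leading principal block submatrix `A_μ` (for `μ ≤ n`) of an
`n × n` block matrix with `k × k` blocks. -/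
def leadBlock {n k : ℕ} (A : Matrix (Fin n × Fin k) (Fin n × Fin k) ℂ)
    (μ : ℕ) (h : μ ≤ n) : Matrix (Fin μ × Fin k) (Fin μ × Fin k) ℂ :=
  A.submatrix (fun p => (Fin.castLE h p.1, p.2)) (fun p => (Fin.castLE h p.1, p.2))

/-- The `μ`-th (1-based) diagonal `k × k` block `A_{μμ}` of an
`n × n` block matrix with `k × k` blocks. -/
def diagBlock {n k : ℕ} (A : Matrix (Fin n × Fin k) (Fin n × Fin k) ℂ)
    (μ : ℕ) (h : μ - 1 < n) : Matrix (Fin k) (Fin k) ℂ :=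
  Matrix.of fun a b => A (⟨μ - 1, h⟩, a) (⟨μ - 1, h⟩, b)

/-- The `k × k` Schur complement `A_μ / A_{μ-1}` of the leading principal block
submatrix `A_{μ-1}` in the leading principal block submatrix `A_μ`, i.e.
`A_{μμ} − M₂₁ A_{μ-1}⁻¹ M₁₂` where `M₂₁` (resp. `M₁₂`) is the `μ`-th block row
(resp. column) of `A_μ` with its last block removed. -/
noncomputable def schurLead {n k : ℕ} (A : Matrix (Fin n × Fin k) (Fin n × Fin k) ℂ)
    (μ : ℕ) (h : μ - 1 < n) : Matrix (Fin k) (Fin k) ℂ :=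
  diagBlock A μ h -
    (Matrix.of fun a (p : Fin (μ - 1) × Fin k) =>
        A (⟨μ - 1, h⟩, a) (Fin.castLE h.le p.1, p.2)) *
      (leadBlock A (μ - 1) h.le)⁻¹ *
      (Matrix.of fun (p : Fin (μ - 1) × Fin k) b =>
        A (Fin.castLE h.le p.1, p.2) (⟨μ - 1, h⟩, b))

namespace SchurHadamardAux

variable {I N : Type*} [Fintype I] [Fintype N] [DecidableEq I] [DecidableEq N]

private lemma sum_swap3 {α β γ : Type*} [Fintype α] [Fintype β] [Fintype γ]
    (f : α → β → γ → ℂ) :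
    ∑ a, ∑ b, ∑ c, f a b c = ∑ c, ∑ a, ∑ b, f a b c := by
  have h1 : ∀ a : α, ∑ b, ∑ c, f a b c = ∑ c, ∑ b, f a b c := fun a => Finset.sum_comm
  simp_rw [h1]
  exact Finset.sum_comm

theorem posDef_submatrix_inj {M : Matrix N N ℂ} (hM : M.PosDef) {f : I → N}
    (hf : Function.Injective f) : (M.submatrix f f).PosDef := by
  classical
  refine Matrix.PosDef.of_dotProduct_mulVec_pos (hM.1.submatrix f) fun x hx => ?_
  set B : Matrix N I ℂ := (1 : Matrix N N ℂ).submatrix id f with hBdef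
  have hy : B *ᵥ x ≠ 0 := by
    obtain ⟨i₀, hi₀⟩ := Function.ne_iff.mp hx
    intro h0
    apply hi₀
    have := congrFun h0 (f i₀)
    simpa [hBdef, Matrix.mulVec, dotProduct, Matrix.one_apply, hf.eq_iff] using this
  have hsub : M.submatrix f f = Bᴴ * M * B := by
    ext i j
    simp [hBdef, Matrix.mul_apply, Matrix.one_apply, Finset.sum_ite_eq, Finset.sum_ite_eq']
  rw [hsub]
  simpa only [star_mulVec, dotProduct_mulVec, vecMul_vecMul] using hM.dotProduct_mulVec_pos hy

theorem quad_hadamard (A : Matrix I I ℂ) (C : Matrix N I ℂ) (x : I → ℂ) :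
    star x ⬝ᵥ (A ⊙ (Cᴴ * C)) *ᵥ x
      = ∑ p, star (fun j => C p j * x j) ⬝ᵥ A *ᵥ (fun j => C p j * x j) := by
  simp only [dotProduct, mulVec, Matrix.hadamard_apply, Matrix.mul_apply,
    conjTranspose_apply, Pi.star_apply, star_mul', Finset.mul_sum, Finset.sum_mul]
  rw [sum_swap3]
  refine Finset.sum_congr rfl fun p _ => ?_
  refine Finset.sum_congr rfl fun i _ => ?_
  refine Finset.sum_congr rfl fun j _ => ?_
  ring

theorem isHermitian_hadamard {A B : Matrix I I ℂ} (hA : A.IsHermitian) (hB : B.IsHermitian) :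
    (A ⊙ B).IsHermitian := by
  ext i j
  simp only [conjTranspose_apply, Matrix.hadamard_apply, star_mul']
  rw [mul_comm, hA.apply, hB.apply, mul_comm]

theorem posSemidef_hadamard {A B : Matrix I I ℂ} (hA : A.PosSemidef) (hB : B.PosSemidef) :
    (A ⊙ B).PosSemidef := by
  exact Matrix.PosSemidef.hadamard hA hB

theorem posDef_hadamard {A B : Matrix I I ℂ} (hA : A.PosDef) (hB : B.PosDef) :
    (A ⊙ B).PosDef := by
  exact Matrix.PosDef.hadamard hA hB

variable {n k : ℕ}

def fSum (k μ : ℕ) (h : μ - 1 < n) : (Fin (μ-1) × Fin k) ⊕ Fin k → Fin n × Fin k :=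
  Sum.elim (fun p => (Fin.castLE h.le p.1, p.2)) (fun a => (⟨μ-1, h⟩, a))

lemma lead_inj (m : ℕ) (h : m ≤ n) :
    Function.Injective (fun p : Fin m × Fin k => ((Fin.castLE h p.1, p.2) : Fin n × Fin k)) := by
  rintro ⟨i, a⟩ ⟨j, b⟩ hpq
  simp only [Prod.mk.injEq] at hpq
  obtain ⟨h1, h2⟩ := hpq
  have := congrArg Fin.val h1
  simp only [Fin.coe_castLE] at this
  simp [Prod.ext_iff, Fin.ext_iff, this, h2]

lemma fSum_inj {μ : ℕ} (h : μ - 1 < n) : Function.Injective (fSum (n := n) k μ h) := by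
  rintro (⟨i, a⟩ | a) (⟨j, b⟩ | b) hpq
  · exact congrArg Sum.inl (lead_inj (μ-1) h.le hpq)
  · exfalso
    simp only [fSum, Sum.elim_inl, Sum.elim_inr, Prod.mk.injEq] at hpq
    have := congrArg Fin.val hpq.1
    simp only [Fin.coe_castLE] at this
    have hi := i.2
    omega
  · exfalso
    simp only [fSum, Sum.elim_inl, Sum.elim_inr, Prod.mk.injEq] at hpq
    have := congrArg Fin.val hpq.1
    simp only [Fin.coe_castLE] at this
    have hj := j.2
    omega
  · simp only [fSum, Sum.elim_inr, Prod.mk.injEq] at hpq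
    simp [hpq.2]


variable {n k : ℕ}

def r12 (M : Matrix (Fin n × Fin k) (Fin n × Fin k) ℂ) (μ : ℕ) (h : μ - 1 < n) :
    Matrix (Fin (μ-1) × Fin k) (Fin k) ℂ :=
  Matrix.of fun p b => M (Fin.castLE h.le p.1, p.2) (⟨μ-1, h⟩, b)

def r21 (M : Matrix (Fin n × Fin k) (Fin n × Fin k) ℂ) (μ : ℕ) (h : μ - 1 < n) :
    Matrix (Fin k) (Fin (μ-1) × Fin k) ℂ :=
  Matrix.of fun a p => M (⟨μ-1, h⟩, a) (Fin.castLE h.le p.1, p.2)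

lemma schurLead_eq (M : Matrix (Fin n × Fin k) (Fin n × Fin k) ℂ) (μ : ℕ) (h : μ - 1 < n) :
    schurLead M μ h
      = diagBlock M μ h - r21 M μ h * (leadBlock M (μ-1) h.le)⁻¹ * r12 M μ h := rfl

lemma submatrix_fSum (M : Matrix (Fin n × Fin k) (Fin n × Fin k) ℂ) (μ : ℕ) (h : μ - 1 < n) :
    M.submatrix (fSum k μ h) (fSum k μ h)
      = Matrix.fromBlocks (leadBlock M (μ-1) h.le) (r12 M μ h) (r21 M μ h) (diagBlock M μ h) := by
  ext (p | a) (q | b) <;> rfl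

lemma r21_eq_conj {M : Matrix (Fin n × Fin k) (Fin n × Fin k) ℂ} (hM : M.IsHermitian)
    (μ : ℕ) (h : μ - 1 < n) : r21 M μ h = (r12 M μ h)ᴴ := by
  ext a p
  simp only [r21, r12, Matrix.conjTranspose_apply, Matrix.of_apply]
  exact (hM.apply _ _).symm

lemma leadBlock_hadamard (A B : Matrix (Fin n × Fin k) (Fin n × Fin k) ℂ) (m : ℕ) (h : m ≤ n) :
    leadBlock (A ⊙ B) m h = leadBlock A m h ⊙ leadBlock B m h := rfl

lemma leadBlock_posDef {A : Matrix (Fin n × Fin k) (Fin n × Fin k) ℂ} (hA : A.PosDef)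
    (m : ℕ) (h : m ≤ n) : (leadBlock A m h).PosDef :=
  posDef_submatrix_inj hA (lead_inj m h)

end SchurHadamardAux

open SchurHadamardAux in
/-- Inequality (2.7): for positive definite block matrices `A, B ∈ M_n(M_k)` and
`2 ≤ μ ≤ n`, both `(A_μ∘B_μ)/(A_{μ-1}∘B_{μ-1}) − A_{μμ}∘(B_μ/B_{μ-1})` and
`A_{μμ}∘(B_μ/B_{μ-1}) − (A_μ/A_{μ-1})∘(B_μ/B_{μ-1})` are positive semidefinite. -/
theorem schur_hadamard_chain_A {n k : ℕ}
    (A B : Matrix (Fin n × Fin k) (Fin n × Fin k) ℂ)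
    (hA : A.PosDef) (hB : B.PosDef)
    (μ : ℕ) (hμ2 : 2 ≤ μ) (hμn : μ ≤ n) :
    (schurLead (Matrix.hadamard A B) μ (by omega) -
        Matrix.hadamard (diagBlock A μ (by omega)) (schurLead B μ (by omega))).PosSemidef ∧
    (Matrix.hadamard (diagBlock A μ (by omega)) (schurLead B μ (by omega)) -
        Matrix.hadamard (schurLead A μ (by omega)) (schurLead B μ (by omega))).PosSemidef := by
  classical
  have h : μ - 1 < n := by omega
  have hA1 : (leadBlock A (μ-1) h.le).PosDef := leadBlock_posDef hA _ _
  have hB1 : (leadBlock B (μ-1) h.le).PosDef := leadBlock_posDef hB _ _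
  have hH1 : (leadBlock (A ⊙ B) (μ-1) h.le).PosDef := by
    rw [leadBlock_hadamard]
    exact posDef_hadamard hA1 hB1
  haveI := hB1.isUnit.invertible
  haveI := hH1.isUnit.invertible
  have hHherm : (A ⊙ B).IsHermitian := isHermitian_hadamard hA.1 hB.1
  have hBsub : ((B.submatrix (fSum k μ h) (fSum k μ h))).PosSemidef :=
    hB.posSemidef.submatrix _
  rw [submatrix_fSum, r21_eq_conj hB.1] at hBsub
  have hSB : (schurLead B μ h).PosSemidef := by
    have := (Matrix.PosDef.fromBlocks₁₁ _ _ hB1).mp hBsub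
    rw [schurLead_eq, r21_eq_conj hB.1]
    exact this
  have hdiff : diagBlock A μ h - schurLead A μ h
      = r21 A μ h * (leadBlock A (μ-1) h.le)⁻¹ * r12 A μ h := by
    rw [schurLead_eq]; exact sub_sub_cancel _ _
  have hdiffPSD : (diagBlock A μ h - schurLead A μ h).PosSemidef := by
    rw [hdiff, r21_eq_conj hA.1]
    exact hA1.inv.posSemidef.conjTranspose_mul_mul_same (r12 A μ h)
  have second : (Matrix.hadamard (diagBlock A μ h) (schurLead B μ h) -
      Matrix.hadamard (schurLead A μ h) (schurLead B μ h)).PosSemidef := by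
    have hsub : Matrix.hadamard (diagBlock A μ h) (schurLead B μ h) -
        Matrix.hadamard (schurLead A μ h) (schurLead B μ h)
        = (diagBlock A μ h - schurLead A μ h) ⊙ schurLead B μ h := by
      ext a b
      simp [Matrix.hadamard_apply, sub_mul, Matrix.sub_apply]
    rw [hsub]
    exact posSemidef_hadamard hdiffPSD hSB
  set N : Matrix ((Fin (μ-1) × Fin k) ⊕ Fin k) ((Fin (μ-1) × Fin k) ⊕ Fin k) ℂ :=
    Matrix.fromBlocks (leadBlock B (μ-1) h.le) (r12 B μ h) (r21 B μ h)
      (diagBlock B μ h - schurLead B μ h) with hNdef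
  have hN : N.PosSemidef := by
    rw [hNdef, r21_eq_conj hB.1]
    refine (Matrix.PosDef.fromBlocks₁₁ _ _ hB1).mpr ?_
    have e0 : diagBlock B μ h - schurLead B μ h -
        (r12 B μ h)ᴴ * (leadBlock B (μ-1) h.le)⁻¹ * r12 B μ h = 0 := by
      rw [← r21_eq_conj hB.1, schurLead_eq, sub_sub_cancel, sub_self]
    rw [e0]
    exact Matrix.PosSemidef.zero
  have hAN : ((A.submatrix (fSum k μ h) (fSum k μ h)) ⊙ N).PosSemidef :=
    posSemidef_hadamard (hA.posSemidef.submatrix _) hN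
  have key : (A.submatrix (fSum k μ h) (fSum k μ h)) ⊙ N
      = Matrix.fromBlocks (leadBlock (A ⊙ B) (μ-1) h.le) (r12 (A ⊙ B) μ h)
          (r21 (A ⊙ B) μ h)
          (diagBlock (A ⊙ B) μ h - Matrix.hadamard (diagBlock A μ h) (schurLead B μ h)) := by
    ext (p | a) (q | b) <;>
      simp [hNdef, fSum, Matrix.hadamard_apply, leadBlock, diagBlock, r12, r21,
        Matrix.fromBlocks, mul_sub, Matrix.sub_apply, Matrix.submatrix_apply]
  rw [key, r21_eq_conj hHherm] at hAN
  have first : (schurLead (A ⊙ B) μ h -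
      Matrix.hadamard (diagBlock A μ h) (schurLead B μ h)).PosSemidef := by
    have := (Matrix.PosDef.fromBlocks₁₁ _ _ hH1).mp hAN
    rw [← r21_eq_conj hHherm] at this
    have e1 : schurLead (A ⊙ B) μ h - Matrix.hadamard (diagBlock A μ h) (schurLead B μ h)
        = diagBlock (A ⊙ B) μ h - Matrix.hadamard (diagBlock A μ h) (schurLead B μ h) -
          r21 (A ⊙ B) μ h * (leadBlock (A ⊙ B) (μ-1) h.le)⁻¹ * r12 (A ⊙ B) μ h := by
      rw [schurLead_eq, sub_right_comm]
    rw [e1]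
    exact this
  exact ⟨first, second⟩
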